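/- arXiv:2502.18159 — 4 statements merged into one kernel-verified Lean document; each statement's English description precedes it below -/
import Mathlib

section
/- Let T_i ~ Exp(i) be independent for i = 1,…,n, let κ_n be independent of the T_i with P(κ_n = k) = (2(n+1)/(n-1))/((k+1)(k+2)) for k = 1,…,n-1, and define τ^{(n)} = Σ_{i=κ_n+1}^{n} T_i. Then E[τ^{(n)}] = ((n+1)/(n-1)) H_{n,1} − 2n/(n-1). -/
open MeasureTheory ProbabilityTheory Finset Real

lemma expPDFReal_eq' {r : ℝ} (x : ℝ) :
    exponentialPDFReal r x = if 0 ≤ x then r * Real.exp (-(r * x)) else 0 := by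
  rw [exponentialPDFReal, gammaPDFReal]
  simp [Real.rpow_one, Real.Gamma_one, Real.rpow_zero]

lemma exp_pdf_mul_id_eq {r : ℝ} :
    (fun x : ℝ => exponentialPDFReal r x * x) =
      (Set.Ici (0:ℝ)).indicator (fun x => r * Real.exp (-(r * x)) * x) := by
  funext x
  by_cases h : 0 ≤ x <;> simp [expPDFReal_eq', h, Set.indicator]

lemma exp_pdf_mul_id_integrableOn {r : ℝ} (hr : 0 < r) :
    IntegrableOn (fun x : ℝ => r * Real.exp (-(r * x)) * x) (Set.Ioi 0) := by
  have h := (integrableOn_rpow_mul_exp_neg_mul_rpow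
      (by norm_num : (-1:ℝ) < 1) one_pos hr).const_mul r
  have heq : (fun x : ℝ => r * Real.exp (-(r * x)) * x)
      = fun x : ℝ => r * (x ^ (1:ℝ) * Real.exp (-r * x ^ (1:ℝ))) := by
    funext x
    rw [Real.rpow_one]
    ring
  rw [heq]
  exact h

lemma exp_pdf_mul_id_integrable {r : ℝ} (hr : 0 < r) :
    Integrable (fun x : ℝ => exponentialPDFReal r x * x) := by
  rw [exp_pdf_mul_id_eq, integrable_indicator_iff measurableSet_Ici,
    integrableOn_Ici_iff_integrableOn_Ioi]
  exact exp_pdf_mul_id_integrableOn hr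

lemma exp_pdf_mul_id_integral {r : ℝ} (hr : 0 < r) :
    ∫ x : ℝ, exponentialPDFReal r x * x = 1 / r := by
  rw [exp_pdf_mul_id_eq, integral_indicator measurableSet_Ici,
    integral_Ici_eq_integral_Ioi]
  have h1 : ∀ x ∈ Set.Ioi (0:ℝ), r * Real.exp (-(r * x)) * x
      = r * (x ^ ((2:ℝ)-1) * Real.exp (-(r * x))) := by
    intro x _
    norm_num [Real.rpow_one]
    ring
  rw [setIntegral_congr_fun measurableSet_Ioi h1, integral_const_mul,
    integral_rpow_mul_exp_neg_mul_Ioi (by norm_num) hr]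
  have h2 : Real.Gamma 2 = 1 := by
    rw [show (2:ℝ) = (1:ℕ) + 1 by norm_num, Real.Gamma_nat_eq_factorial]
    simp
  rw [h2, mul_one, show ((2:ℝ)) = ((2:ℕ):ℝ) by norm_num, Real.rpow_natCast]
  field_simp

lemma expMeasure_eq_withDensity (r : ℝ) :
    expMeasure r = MeasureTheory.volume.withDensity
      (fun x => ((exponentialPDFReal r x).toNNReal : ENNReal)) := by
  rw [expMeasure, gammaMeasure]
  rfl

lemma exp_meas_pdf_measurable (r : ℝ) :
    Measurable (fun x => (exponentialPDFReal r x).toNNReal) :=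
  (measurable_exponentialPDFReal r).real_toNNReal

lemma exp_smul_eq (r : ℝ) (hr : 0 < r) :
    (fun x : ℝ => (exponentialPDFReal r x).toNNReal • x) =
      fun x => exponentialPDFReal r x * x := by
  funext x
  rw [NNReal.smul_def, Real.coe_toNNReal _ (exponentialPDFReal_nonneg hr x), smul_eq_mul]

lemma expMeasure_integrable_id {r : ℝ} (hr : 0 < r) :
    Integrable (fun x : ℝ => x) (expMeasure r) := by
  rw [expMeasure_eq_withDensity,
    integrable_withDensity_iff_integrable_smul (exp_meas_pdf_measurable r),
    exp_smul_eq r hr]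
  exact exp_pdf_mul_id_integrable hr

lemma expMeasure_integral_id {r : ℝ} (hr : 0 < r) :
    ∫ x, x ∂(expMeasure r) = 1 / r := by
  rw [expMeasure_eq_withDensity,
    integral_withDensity_eq_integral_smul (exp_meas_pdf_measurable r),
    exp_smul_eq r hr]
  exact exp_pdf_mul_id_integral hr

lemma sum_frac (m : ℕ) :
    ∑ k ∈ Finset.Icc 1 m, (2 / (((k:ℝ)+1) * ((k:ℝ)+2))) = (m:ℝ) / ((m:ℝ)+2) := by
  induction m with
  | zero => simp
  | succ m ih =>
    rw [Finset.sum_Icc_succ_top (Nat.le_add_left 1 m), ih]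
    have h1 : ((m:ℝ)+2) ≠ 0 := by positivity
    have h2 : ((m:ℝ)+1+1) ≠ 0 := by positivity
    have h3 : ((m:ℝ)+1+2) ≠ 0 := by positivity
    push_cast
    field_simp
    ring

lemma key_sum (n : ℕ) (hn : 2 ≤ n) :
    ∑ k ∈ Finset.Icc 1 (n-1), (2 / (((k:ℝ)+1) * ((k:ℝ)+2))) *
        (∑ i ∈ Finset.Icc (k+1) n, (1:ℝ)/i)
      = (∑ i ∈ Finset.Icc 1 n, (1:ℝ)/i) - 2*(n:ℝ)/((n:ℝ)+1) := by
  induction n, hn using Nat.le_induction with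
  | base =>
    rw [show (2:ℕ) - 1 = 1 from rfl]
    rw [show Finset.Icc 1 1 = {1} from Finset.Icc_self 1, Finset.sum_singleton]
    rw [show Finset.Icc 2 2 = {2} from Finset.Icc_self 2, Finset.sum_singleton]
    rw [show Finset.Icc 1 2 = {1, 2} by decide]
    norm_num
  | succ n hn ih =>
    obtain ⟨m, rfl⟩ : ∃ m, n = m + 1 := ⟨n-1, by omega⟩
    simp only [Nat.add_sub_cancel] at ih ⊢
    rw [Finset.sum_Icc_succ_top (show 1 ≤ m+1 by omega)]
    have hS : ∀ k ∈ Finset.Icc 1 m,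
        (2 / (((k:ℝ)+1) * ((k:ℝ)+2))) * (∑ i ∈ Finset.Icc (k+1) (m+1+1), (1:ℝ)/i)
          = (2 / (((k:ℝ)+1) * ((k:ℝ)+2))) * (∑ i ∈ Finset.Icc (k+1) (m+1), (1:ℝ)/i)
            + (2 / (((k:ℝ)+1) * ((k:ℝ)+2))) * (1/((m:ℝ)+2)) := by
      intro k hk
      have hk' := Finset.mem_Icc.mp hk
      rw [Finset.sum_Icc_succ_top (by omega : k+1 ≤ m+1+1)]
      push_cast
      ring
    rw [Finset.sum_congr rfl hS, Finset.sum_add_distrib, ← Finset.sum_mul, sum_frac, ih]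
    rw [show Finset.Icc (m+1+1) (m+1+1) = {m+1+1} from Finset.Icc_self _,
      Finset.sum_singleton,
      Finset.sum_Icc_succ_top (show 1 ≤ m+1+1 by omega)]
    have h1 : ((m:ℝ)+2) ≠ 0 := by positivity
    have h2 : ((m:ℝ)+1+1) ≠ 0 := by positivity
    have h3 : ((m:ℝ)+3) ≠ 0 := by positivity
    push_cast
    field_simp
    ring

theorem expectation_coalescent_time
    {Ω : Type*} [MeasurableSpace Ω] {P : Measure Ω} [IsProbabilityMeasure P]
    (n : ℕ) (hn : 2 ≤ n)
    (T : ℕ → Ω → ℝ) (κ : Ω → ℕ)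
    (hTmeas : ∀ i, Measurable (T i)) (hκmeas : Measurable κ)
    (hTindep : iIndepFun T P)
    (hTdist : ∀ i ∈ Finset.Icc 1 n, P.map (T i) = expMeasure i)
    (hκrange : ∀ ω, κ ω ∈ Finset.Icc 1 (n - 1))
    (hκdist : ∀ k ∈ Finset.Icc 1 (n - 1),
      P {ω | κ ω = k} =
        ENNReal.ofReal ((2 * ((n : ℝ) + 1) / ((n : ℝ) - 1)) *
          (1 / (((k : ℝ) + 1) * ((k : ℝ) + 2)))))
    (hindep : IndepFun κ (fun ω i => T i ω) P)
    (H1 H2 : ℝ)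
    (hH1 : H1 = ∑ i ∈ Finset.Icc 1 n, (1 : ℝ) / i)
    (hH2 : H2 = ∑ i ∈ Finset.Icc 1 n, (1 : ℝ) / (i : ℝ) ^ 2) :
    ∫ ω, (∑ i ∈ Finset.Icc (κ ω + 1) n, T i ω) ∂P =
      ((n : ℝ) + 1) / ((n : ℝ) - 1) * H1 - 2 * (n : ℝ) / ((n : ℝ) - 1) := by
  have hn1 : (1:ℝ) < (n:ℝ) := by exact_mod_cast (by omega : 1 < n)
  set f : ℕ → Ω → ℝ := fun k ω => ∑ i ∈ Finset.Icc (k+1) n, T i ω with hfdef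
  -- integrability and expectation of each T i
  have hTint : ∀ i ∈ Finset.Icc 1 n, Integrable (T i) P := by
    intro i hi
    have hi1 : (0:ℝ) < (i:ℝ) :=
      Nat.cast_pos.mpr (by have := (Finset.mem_Icc.mp hi).1; omega)
    have h1 : Integrable (id : ℝ → ℝ) (P.map (T i)) := by
      rw [hTdist i hi]; exact expMeasure_integrable_id hi1
    rw [integrable_map_measure aestronglyMeasurable_id (hTmeas i).aemeasurable] at h1
    simpa [Function.comp] using h1
  have hTexp : ∀ i ∈ Finset.Icc 1 n, ∫ ω, T i ω ∂P = 1 / (i:ℝ) := by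
    intro i hi
    have hi1 : (0:ℝ) < (i:ℝ) :=
      Nat.cast_pos.mpr (by have := (Finset.mem_Icc.mp hi).1; omega)
    have h1 : ∫ x, x ∂(P.map (T i)) = ∫ ω, T i ω ∂P :=
      integral_map (hTmeas i).aemeasurable aestronglyMeasurable_id
    rw [← h1, hTdist i hi]
    exact expMeasure_integral_id hi1
  have hsub : ∀ k i : ℕ, i ∈ Finset.Icc (k+1) n → i ∈ Finset.Icc 1 n := by
    intro k i hi
    rw [Finset.mem_Icc] at hi ⊢
    omega
  have hfint : ∀ k, Integrable (f k) P := by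
    intro k
    exact integrable_finset_sum _ (fun i hi => hTint i (hsub k i hi))
  have hfexp : ∀ k, ∫ ω, f k ω ∂P = ∑ i ∈ Finset.Icc (k+1) n, 1/(i:ℝ) := by
    intro k
    rw [hfdef, integral_finset_sum _ (fun i hi => hTint i (hsub k i hi))]
    exact Finset.sum_congr rfl (fun i hi => hTexp i (hsub k i hi))
  have hmeasset : ∀ k : ℕ, MeasurableSet {ω | κ ω = k} :=
    fun k => hκmeas (measurableSet_singleton k)
  -- set integral via independence
  have hsetint : ∀ k ∈ Finset.Icc 1 (n-1),
      ∫ ω, Set.indicator {ω' | κ ω' = k} (f k) ω ∂P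
        = ((2 * ((n:ℝ)+1) / ((n:ℝ)-1)) * (1 / (((k:ℝ)+1)*((k:ℝ)+2))))
            * ∑ i ∈ Finset.Icc (k+1) n, 1/(i:ℝ) := by
    intro k hk
    set X : Ω → ℝ := Set.indicator {ω' | κ ω' = k} (fun _ => (1:ℝ)) with hXdef
    have hXeq : ∀ ω, Set.indicator {ω' | κ ω' = k} (f k) ω = X ω * f k ω := by
      intro ω
      by_cases h : κ ω = k <;> simp [hXdef, Set.indicator, h]
    have hXcomp : X = (fun j : ℕ => Set.indicator ({k} : Set ℕ) (fun _ => (1:ℝ)) j) ∘ κ := by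
      funext ω
      by_cases h : κ ω = k <;> simp [hXdef, Set.indicator, h]
    have hIndep : IndepFun X (f k) P := by
      have hF : Measurable (fun v : ℕ → ℝ => ∑ i ∈ Finset.Icc (k+1) n, v i) :=
        Finset.measurable_sum _ (fun i _ => measurable_pi_apply i)
      have h := hindep.comp (measurable_of_countable
        (fun j : ℕ => Set.indicator ({k} : Set ℕ) (fun _ => (1:ℝ)) j)) hF
      rw [hXcomp]
      exact h
    have hXint : Integrable X P := (integrable_const (1:ℝ)).indicator (hmeasset k)
    have hmul := hIndep.integral_mul_eq_mul_integral hXint.aestronglyMeasurable (hfint k).aestronglyMeasurable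
    have hXval : ∫ ω, X ω ∂P
        = (2 * ((n:ℝ)+1) / ((n:ℝ)-1)) * (1 / (((k:ℝ)+1)*((k:ℝ)+2))) := by
      rw [hXdef, integral_indicator_const (1:ℝ) (hmeasset k), measureReal_def, hκdist k hk,
        ENNReal.toReal_ofReal, smul_eq_mul, mul_one]
      have hp1 : (0:ℝ) < (n:ℝ) - 1 := by linarith
      positivity
    calc ∫ ω, Set.indicator {ω' | κ ω' = k} (f k) ω ∂P
        = ∫ ω, X ω * f k ω ∂P := by
          exact integral_congr_ae (Filter.Eventually.of_forall hXeq)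
      _ = (∫ ω, X ω ∂P) * ∫ ω, f k ω ∂P := hmul
      _ = _ := by rw [hXval, hfexp k]
  -- decompose the integrand
  have hpt : ∀ ω, (∑ i ∈ Finset.Icc (κ ω + 1) n, T i ω)
      = ∑ k ∈ Finset.Icc 1 (n-1), Set.indicator {ω' | κ ω' = k} (f k) ω := by
    intro ω
    symm
    rw [Finset.sum_eq_single_of_mem (κ ω) (hκrange ω)]
    · exact Set.indicator_of_mem (by simp) _
    · intro b _ hbne
      exact Set.indicator_of_notMem (by simpa using fun h : κ ω = b => hbne h.symm) _
  calc ∫ ω, (∑ i ∈ Finset.Icc (κ ω + 1) n, T i ω) ∂P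
      = ∫ ω, ∑ k ∈ Finset.Icc 1 (n-1),
          Set.indicator {ω' | κ ω' = k} (f k) ω ∂P :=
        integral_congr_ae (Filter.Eventually.of_forall hpt)
    _ = ∑ k ∈ Finset.Icc 1 (n-1),
          ∫ ω, Set.indicator {ω' | κ ω' = k} (f k) ω ∂P :=
        integral_finset_sum _ (fun k _ => (hfint k).indicator (hmeasset k))
    _ = ∑ k ∈ Finset.Icc 1 (n-1),
          ((2 * ((n:ℝ)+1) / ((n:ℝ)-1)) * (1 / (((k:ℝ)+1)*((k:ℝ)+2))))
            * ∑ i ∈ Finset.Icc (k+1) n, 1/(i:ℝ) :=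
        Finset.sum_congr rfl hsetint
    _ = (((n:ℝ)+1) / ((n:ℝ)-1)) * ∑ k ∈ Finset.Icc 1 (n-1),
          (2 / (((k:ℝ)+1)*((k:ℝ)+2))) * ∑ i ∈ Finset.Icc (k+1) n, (1:ℝ)/(i:ℝ) := by
        rw [Finset.mul_sum]
        exact Finset.sum_congr rfl (fun k _ => by ring)
    _ = (((n:ℝ)+1) / ((n:ℝ)-1)) * (H1 - 2*(n:ℝ)/((n:ℝ)+1)) := by
        rw [key_sum n hn, hH1]
    _ = ((n : ℝ) + 1) / ((n : ℝ) - 1) * H1 - 2 * (n : ℝ) / ((n : ℝ) - 1) := by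
        have h1 : ((n:ℝ) - 1) ≠ 0 := by linarith
        have h2 : ((n:ℝ) + 1) ≠ 0 := by linarith
        field_simp
end

section
/- With the Yule model setup, E[(τ^{(n)})^2] = ((n+1)/(n-1))·((H_{n,1} − 2)^2 + H_{n,2}) − 4/(n-1). -/
open Finset

private lemma ymx_sumW (m : ℕ) :
    ∑ k ∈ Icc 1 m, 1 / (((k : ℝ) + 1) * ((k : ℝ) + 2)) = (m : ℝ) / (2 * ((m : ℝ) + 2)) := by
  induction m with
  | zero => simp
  | succ m ih =>
    rw [Finset.sum_Icc_succ_top (by omega), ih]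
    have h1 : (m : ℝ) + 2 ≠ 0 := by positivity
    have h2 : (m : ℝ) + 3 ≠ 0 := by positivity
    push_cast
    field_simp
    ring

private lemma ymx_sumA (m : ℕ) :
    ∑ k ∈ Icc 1 m, 1 / (((k : ℝ) + 1) * ((k : ℝ) + 2)) *
        (∑ i ∈ Icc (k + 1) (m + 1), (1 : ℝ) / i) =
      ((∑ i ∈ Icc 1 (m + 1), (1 : ℝ) / i) - 2) / 2 + 1 / ((m : ℝ) + 2) := by
  induction m with
  | zero => norm_num
  | succ m ih =>
    have h1 : (m : ℝ) + 2 ≠ 0 := by positivity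
    have h2 : (m : ℝ) + 3 ≠ 0 := by positivity
    -- extended ih : sum up to m+1 with inner up to m+1
    have ihx : ∑ k ∈ Icc 1 (m + 1), 1 / (((k : ℝ) + 1) * ((k : ℝ) + 2)) *
        (∑ i ∈ Icc (k + 1) (m + 1), (1 : ℝ) / i) =
        ((∑ i ∈ Icc 1 (m + 1), (1 : ℝ) / i) - 2) / 2 + 1 / ((m : ℝ) + 2) := by
      rw [Finset.sum_Icc_succ_top (by omega),
        show Icc (m + 1 + 1) (m + 1) = ∅ from Finset.Icc_eq_empty (by omega)]
      simp only [Finset.sum_empty, mul_zero, add_zero]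
      exact ih
    have hsplit : ∀ k ∈ Icc 1 (m + 1),
        1 / (((k : ℝ) + 1) * ((k : ℝ) + 2)) * (∑ i ∈ Icc (k + 1) (m + 2), (1 : ℝ) / i)
          = 1 / (((k : ℝ) + 1) * ((k : ℝ) + 2)) * (∑ i ∈ Icc (k + 1) (m + 1), (1 : ℝ) / i)
            + (1 / ((m : ℝ) + 2)) * (1 / (((k : ℝ) + 1) * ((k : ℝ) + 2))) := by
      intro k hk
      have hk' : k + 1 ≤ m + 2 := by simp at hk; omega
      rw [Finset.sum_Icc_succ_top hk']
      push_cast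
      ring
    rw [Finset.sum_congr rfl hsplit, Finset.sum_add_distrib, ihx, ← Finset.mul_sum, ymx_sumW]
    rw [Finset.sum_Icc_succ_top (show 1 ≤ m + 1 + 1 by omega)]
    push_cast
    field_simp
    ring

private lemma ymx_sumD (m : ℕ) :
    ∑ k ∈ Icc 1 m, 1 / (((k : ℝ) + 1) * ((k : ℝ) + 2)) *
        ((∑ i ∈ Icc (k + 1) (m + 1), (1 : ℝ) / i) ^ 2
          + ∑ i ∈ Icc (k + 1) (m + 1), (1 : ℝ) / (i : ℝ) ^ 2) =
      (((∑ i ∈ Icc 1 (m + 1), (1 : ℝ) / i) - 2) ^ 2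
          + ∑ i ∈ Icc 1 (m + 1), (1 : ℝ) / (i : ℝ) ^ 2) / 2 - 2 / ((m : ℝ) + 2) := by
  induction m with
  | zero => norm_num
  | succ m ih =>
    have h1 : (m : ℝ) + 2 ≠ 0 := by positivity
    have h2 : (m : ℝ) + 3 ≠ 0 := by positivity
    have ihx : ∑ k ∈ Icc 1 (m + 1), 1 / (((k : ℝ) + 1) * ((k : ℝ) + 2)) *
        ((∑ i ∈ Icc (k + 1) (m + 1), (1 : ℝ) / i) ^ 2
          + ∑ i ∈ Icc (k + 1) (m + 1), (1 : ℝ) / (i : ℝ) ^ 2) =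
        (((∑ i ∈ Icc 1 (m + 1), (1 : ℝ) / i) - 2) ^ 2
          + ∑ i ∈ Icc 1 (m + 1), (1 : ℝ) / (i : ℝ) ^ 2) / 2 - 2 / ((m : ℝ) + 2) := by
      rw [Finset.sum_Icc_succ_top (by omega),
        show Icc (m + 1 + 1) (m + 1) = ∅ from Finset.Icc_eq_empty (by omega)]
      simp only [Finset.sum_empty, mul_zero, add_zero, zero_pow, ne_eq, OfNat.ofNat_ne_zero,
        not_false_eq_true, zero_add, mul_zero]
      linarith [ih]
    have ihA : ∑ k ∈ Icc 1 (m + 1), 1 / (((k : ℝ) + 1) * ((k : ℝ) + 2)) *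
        (∑ i ∈ Icc (k + 1) (m + 1), (1 : ℝ) / i) =
        ((∑ i ∈ Icc 1 (m + 1), (1 : ℝ) / i) - 2) / 2 + 1 / ((m : ℝ) + 2) := by
      rw [Finset.sum_Icc_succ_top (by omega),
        show Icc (m + 1 + 1) (m + 1) = ∅ from Finset.Icc_eq_empty (by omega)]
      simp only [Finset.sum_empty, mul_zero, add_zero]
      exact ymx_sumA m
    have hsplit : ∀ k ∈ Icc 1 (m + 1),
        1 / (((k : ℝ) + 1) * ((k : ℝ) + 2)) *
          ((∑ i ∈ Icc (k + 1) (m + 2), (1 : ℝ) / i) ^ 2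
            + ∑ i ∈ Icc (k + 1) (m + 2), (1 : ℝ) / (i : ℝ) ^ 2)
        = 1 / (((k : ℝ) + 1) * ((k : ℝ) + 2)) *
            ((∑ i ∈ Icc (k + 1) (m + 1), (1 : ℝ) / i) ^ 2
              + ∑ i ∈ Icc (k + 1) (m + 1), (1 : ℝ) / (i : ℝ) ^ 2)
          + (2 * (1 / ((m : ℝ) + 2))) * (1 / (((k : ℝ) + 1) * ((k : ℝ) + 2)) *
              (∑ i ∈ Icc (k + 1) (m + 1), (1 : ℝ) / i))
          + (2 * (1 / ((m : ℝ) + 2)) ^ 2) * (1 / (((k : ℝ) + 1) * ((k : ℝ) + 2))) := by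
      intro k hk
      have hk' : k + 1 ≤ m + 2 := by simp at hk; omega
      have hk1 : (k : ℝ) + 1 ≠ 0 := by positivity
      have hk2 : (k : ℝ) + 2 ≠ 0 := by positivity
      rw [Finset.sum_Icc_succ_top hk', Finset.sum_Icc_succ_top hk']
      push_cast
      field_simp
      ring
    rw [Finset.sum_congr rfl hsplit, Finset.sum_add_distrib, Finset.sum_add_distrib, ihx,
      ← Finset.mul_sum, ihA, ← Finset.mul_sum, ymx_sumW]
    rw [Finset.sum_Icc_succ_top (show 1 ≤ m + 1 + 1 by omega),
      Finset.sum_Icc_succ_top (show 1 ≤ m + 1 + 1 by omega)]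
    push_cast
    field_simp
    ring

open MeasureTheory ProbabilityTheory Finset Real
open scoped ENNReal NNReal

private lemma ymx_expPDF_eq (r : ℝ) :
    exponentialPDFReal r = Set.indicator (Set.Ici 0) (fun x => r * Real.exp (-(r * x))) := by
  funext x
  rw [exponentialPDFReal, gammaPDFReal, Set.indicator_apply]
  simp only [Set.mem_Ici, rpow_one, Real.Gamma_one, div_one, sub_self, Real.rpow_zero, mul_one]

private lemma ymx_exp_integrableOn (r : ℝ) (hr : 0 < r) (p : ℕ) :
    IntegrableOn (fun x : ℝ => x ^ p * Real.exp (-(r * x))) (Set.Ioi 0) := by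
  have h := integrableOn_rpow_mul_exp_neg_mul_rpow (p := 1) (s := (p : ℝ)) (b := r)
    (lt_of_lt_of_le neg_one_lt_zero (Nat.cast_nonneg p)) one_pos hr
  refine h.congr_fun (fun x hx => ?_) measurableSet_Ioi
  dsimp only
  rw [Real.rpow_one, Real.rpow_natCast, neg_mul]

private lemma ymx_exp_moment (r : ℝ) (hr : 0 < r) (p : ℕ) :
    Integrable (fun x : ℝ => x ^ p) (expMeasure r) ∧
      ∫ x, x ^ p ∂(expMeasure r) = (Nat.factorial p : ℝ) / r ^ p := by
  have hpdf_nonneg : ∀ x, 0 ≤ exponentialPDFReal r x := exponentialPDFReal_nonneg hr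
  have hmeas : Measurable (fun x => (exponentialPDFReal r x).toNNReal) :=
    (measurable_exponentialPDFReal r).real_toNNReal
  have hdens : expMeasure r
      = MeasureTheory.volume.withDensity (fun x => ((exponentialPDFReal r x).toNNReal : ℝ≥0∞)) := by
    rw [expMeasure, gammaMeasure]
    rfl
  have hsmul : ∀ x : ℝ, ((exponentialPDFReal r x).toNNReal : ℝ) • (x ^ p)
      = Set.indicator (Set.Ici 0) (fun x => r * (x ^ p * Real.exp (-(r * x)))) x := by
    intro x
    rw [smul_eq_mul, Real.coe_toNNReal _ (hpdf_nonneg x), ymx_expPDF_eq]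
    by_cases hx : x ∈ Set.Ici 0
    · rw [Set.indicator_of_mem hx, Set.indicator_of_mem hx]; ring
    · rw [Set.indicator_of_notMem hx, Set.indicator_of_notMem hx, zero_mul]
  have hIOn : IntegrableOn (fun x : ℝ => r * (x ^ p * Real.exp (-(r * x)))) (Set.Ici 0) := by
    rw [integrableOn_Ici_iff_integrableOn_Ioi]
    exact (ymx_exp_integrableOn r hr p).const_mul r
  have hint : Integrable (fun x => ((exponentialPDFReal r x).toNNReal : ℝ) • (x ^ p))
      MeasureTheory.volume := by
    rw [show (fun x => ((exponentialPDFReal r x).toNNReal : ℝ) • (x ^ p)) = _ from funext hsmul]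
    exact (integrable_indicator_iff measurableSet_Ici).2 hIOn
  constructor
  · rw [hdens, integrable_withDensity_iff_integrable_smul hmeas]
    exact hint
  · rw [hdens, integral_withDensity_eq_integral_smul hmeas]
    calc ∫ x, ((exponentialPDFReal r x).toNNReal : ℝ) • (x ^ p)
        = ∫ x, Set.indicator (Set.Ici 0) (fun x => r * (x ^ p * Real.exp (-(r * x)))) x := by
          exact congrArg _ (funext hsmul)
      _ = ∫ x in Set.Ici 0, r * (x ^ p * Real.exp (-(r * x))) :=
          integral_indicator measurableSet_Ici
      _ = ∫ x in Set.Ioi 0, r * (x ^ p * Real.exp (-(r * x))) :=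
          MeasureTheory.integral_Ici_eq_integral_Ioi
      _ = r * ∫ x in Set.Ioi 0, x ^ p * Real.exp (-(r * x)) := integral_const_mul r _
      _ = r * ∫ x in Set.Ioi 0, x ^ (((p : ℝ) + 1) - 1) * Real.exp (-(r * x)) := by
          congr 1
          refine setIntegral_congr_fun measurableSet_Ioi (fun x hx => ?_)
          rw [add_sub_cancel_right, Real.rpow_natCast]
      _ = r * ((1 / r) ^ ((p : ℝ) + 1) * Real.Gamma ((p : ℝ) + 1)) := by
          rw [integral_rpow_mul_exp_neg_mul_Ioi (by positivity) hr]
      _ = (Nat.factorial p : ℝ) / r ^ p := by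
          rw [Real.Gamma_nat_eq_factorial,
            show ((p : ℝ) + 1) = ((p + 1 : ℕ) : ℝ) by push_cast; ring, Real.rpow_natCast]
          have : r ^ p ≠ 0 := by positivity
          have hrne : r ≠ 0 := ne_of_gt hr
          field_simp
          rw [pow_succ]
          rw [one_div, inv_pow]; field_simp

theorem second_moment_coalescent_time
    {Ω : Type*} [MeasurableSpace Ω] {P : Measure Ω} [IsProbabilityMeasure P]
    (n : ℕ) (hn : 2 ≤ n)
    (T : ℕ → Ω → ℝ) (κ : Ω → ℕ)
    (hTmeas : ∀ i, Measurable (T i)) (hκmeas : Measurable κ)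
    (hTindep : iIndepFun T P)
    (hTdist : ∀ i ∈ Finset.Icc 1 n, P.map (T i) = expMeasure i)
    (hκrange : ∀ ω, κ ω ∈ Finset.Icc 1 (n - 1))
    (hκdist : ∀ k ∈ Finset.Icc 1 (n - 1),
      P {ω | κ ω = k} =
        ENNReal.ofReal ((2 * ((n : ℝ) + 1) / ((n : ℝ) - 1)) *
          (1 / (((k : ℝ) + 1) * ((k : ℝ) + 2)))))
    (hindep : IndepFun κ (fun ω i => T i ω) P)
    (H1 H2 : ℝ)
    (hH1 : H1 = ∑ i ∈ Finset.Icc 1 n, (1 : ℝ) / i)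
    (hH2 : H2 = ∑ i ∈ Finset.Icc 1 n, (1 : ℝ) / (i : ℝ) ^ 2) :
    ∫ ω, (∑ i ∈ Finset.Icc (κ ω + 1) n, T i ω) ^ 2 ∂P =
      ((n : ℝ) + 1) / ((n : ℝ) - 1) * ((H1 - 2) ^ 2 + H2) - 4 / ((n : ℝ) - 1) := by
  classical
  obtain ⟨m, rfl⟩ : ∃ m, n = m + 1 := ⟨n - 1, by omega⟩
  have hm : 1 ≤ m := by omega
  simp only [Nat.add_sub_cancel] at hκrange hκdist
  set n := m + 1 with hn_def
  have hpos : ∀ i : ℕ, i ∈ Icc 1 n → (0 : ℝ) < (i : ℝ) := by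
    intro i hi
    have h1 : 1 ≤ i := (Finset.mem_Icc.mp hi).1
    exact_mod_cast Nat.lt_of_lt_of_le Nat.zero_lt_one h1
  -- moments of T i
  have hTmap : ∀ i ∈ Icc 1 n, ∀ p : ℕ, Integrable (fun ω => (T i ω) ^ p) P ∧
      ∫ ω, (T i ω) ^ p ∂P = (Nat.factorial p : ℝ) / (i : ℝ) ^ p := by
    intro i hi p
    obtain ⟨hint, hval⟩ := ymx_exp_moment i (hpos i hi) p
    have hmbT : AEMeasurable (T i) P := (hTmeas i).aemeasurable
    have hsm : AEStronglyMeasurable (fun x : ℝ => x ^ p) (P.map (T i)) :=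
      (measurable_id.pow_const p).aestronglyMeasurable
    constructor
    · have h2 : Integrable (fun x : ℝ => x ^ p) (P.map (T i)) := by
        rw [hTdist i hi]; exact hint
      exact (integrable_map_measure hsm hmbT).mp h2
    · rw [← hval, ← hTdist i hi, integral_map hmbT hsm]
  have hTint : ∀ i ∈ Icc 1 n, Integrable (T i) P := by
    intro i hi
    have := (hTmap i hi 1).1
    simpa [pow_one] using this
  have hTE : ∀ i ∈ Icc 1 n, ∫ ω, T i ω ∂P = 1 / (i : ℝ) := by
    intro i hi
    have := (hTmap i hi 1).2
    simpa [pow_one, Nat.factorial] using this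
  -- products
  have hIprod : ∀ i ∈ Icc 1 n, ∀ j ∈ Icc 1 n, Integrable (fun ω => T i ω * T j ω) P := by
    intro i hi j hj
    rcases eq_or_ne i j with rfl | hij
    · have := (hTmap i hi 2).1
      simpa [pow_two] using this
    · exact (hTindep.indepFun hij).integrable_mul (hTint i hi) (hTint j hj)
  have hEprod : ∀ i ∈ Icc 1 n, ∀ j ∈ Icc 1 n, ∫ ω, T i ω * T j ω ∂P =
      1 / (i : ℝ) * (1 / (j : ℝ)) + (if i = j then 1 / (i : ℝ) ^ 2 else 0) := by
    intro i hi j hj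
    rcases eq_or_ne i j with rfl | hij
    · have h2 := (hTmap i hi 2).2
      have hval : ∫ ω, T i ω * T i ω ∂P = 2 / (i : ℝ) ^ 2 := by
        rw [show (fun ω => T i ω * T i ω) = fun ω => (T i ω) ^ 2 by funext ω; ring, h2]
        norm_num [Nat.factorial]
      rw [hval, if_pos rfl]
      have : (i : ℝ) ≠ 0 := ne_of_gt (hpos i hi)
      field_simp
      ring
    · rw [if_neg hij, add_zero, ← hTE i hi, ← hTE j hj]
      exact IndepFun.integral_fun_mul_eq_mul_integral (hTindep.indepFun hij) (hTint i hi).aestronglyMeasurable (hTint j hj).aestronglyMeasurable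
  -- block sums
  have hsub : ∀ k : ℕ, Icc (k + 1) n ⊆ Icc 1 n :=
    fun k => Finset.Icc_subset_Icc (by omega) le_rfl
  have hSfun : ∀ k : ℕ, (fun ω => (∑ i ∈ Icc (k + 1) n, T i ω) ^ 2) =
      fun ω => ∑ i ∈ Icc (k + 1) n, ∑ j ∈ Icc (k + 1) n, T i ω * T j ω := by
    intro k; funext ω; rw [sq, Finset.sum_mul_sum]
  have hSint : ∀ k : ℕ, Integrable (fun ω => (∑ i ∈ Icc (k + 1) n, T i ω) ^ 2) P := by
    intro k
    rw [hSfun k]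
    exact integrable_finset_sum _ (fun i hi => integrable_finset_sum _
      (fun j hj => hIprod i (hsub k hi) j (hsub k hj)))
  have hSE : ∀ k : ℕ, ∫ ω, (∑ i ∈ Icc (k + 1) n, T i ω) ^ 2 ∂P =
      (∑ i ∈ Icc (k + 1) n, 1 / (i : ℝ)) ^ 2 + ∑ i ∈ Icc (k + 1) n, 1 / (i : ℝ) ^ 2 := by
    intro k
    rw [hSfun k, integral_finset_sum _ (fun i hi => integrable_finset_sum _
      (fun j hj => hIprod i (hsub k hi) j (hsub k hj)))]
    rw [Finset.sum_congr rfl (fun i hi => integral_finset_sum _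
      (fun j hj => hIprod i (hsub k hi) j (hsub k hj)))]
    rw [Finset.sum_congr rfl (fun i hi => Finset.sum_congr rfl
      (fun j hj => hEprod i (hsub k hi) j (hsub k hj)))]
    simp only [Finset.sum_add_distrib]
    congr 1
    · rw [← Finset.sum_mul_sum, sq]
    · exact Finset.sum_congr rfl (fun i hi => by rw [Finset.sum_ite_eq, if_pos hi])
  -- indicator variables
  have hXind : ∀ k : ℕ, (fun ω => if κ ω = k then (1 : ℝ) else 0) =
      Set.indicator (κ ⁻¹' {k}) (fun _ => (1 : ℝ)) := by
    intro k; funext ω; rw [Set.indicator_apply]; simp [Set.mem_preimage]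
  have hXint : ∀ k : ℕ, Integrable (fun ω => if κ ω = k then (1 : ℝ) else 0) P := by
    intro k
    rw [hXind k]
    exact (integrable_const (1 : ℝ)).indicator (hκmeas (measurableSet_singleton k))
  have hXE : ∀ k : ℕ, ∫ ω, (if κ ω = k then (1 : ℝ) else 0) ∂P = (P {ω | κ ω = k}).toReal := by
    intro k
    rw [hXind k, integral_indicator_const (1 : ℝ) (hκmeas (measurableSet_singleton k)),
      smul_eq_mul, mul_one]
    congr 1
  have hIndepk : ∀ k : ℕ, IndepFun (fun ω => if κ ω = k then (1 : ℝ) else 0)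
      (fun ω => (∑ i ∈ Icc (k + 1) n, T i ω) ^ 2) P := by
    intro k
    have hφ : Measurable (fun t : ℕ => if t = k then (1 : ℝ) else 0) := measurable_from_top
    have hψ : Measurable (fun v : ℕ → ℝ => (∑ i ∈ Icc (k + 1) n, v i) ^ 2) :=
      (Finset.measurable_sum _ (fun i _ => measurable_pi_apply i)).pow_const 2
    exact hindep.comp hφ hψ
  -- pointwise decomposition
  have hpoint : ∀ ω, (∑ i ∈ Icc (κ ω + 1) n, T i ω) ^ 2 =
      ∑ k ∈ Icc 1 m, (if κ ω = k then (1 : ℝ) else 0) * (∑ i ∈ Icc (k + 1) n, T i ω) ^ 2 := by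
    intro ω
    rw [Finset.sum_eq_single (κ ω)
      (fun b _ hb => by rw [if_neg (fun h => hb h.symm), zero_mul])
      (fun h => absurd (hκrange ω) h)]
    rw [if_pos rfl, one_mul]
  have hwnonneg : ∀ k : ℕ, 0 ≤ (2 * ((n : ℝ) + 1) / ((n : ℝ) - 1)) *
      (1 / (((k : ℝ) + 1) * ((k : ℝ) + 2))) := by
    intro k
    have h1 : (1 : ℝ) ≤ (n : ℝ) := by exact_mod_cast Nat.one_le_iff_ne_zero.mpr (by omega)
    apply mul_nonneg (div_nonneg (by positivity) (by linarith)) (by positivity)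
  have key : ∫ ω, (∑ i ∈ Icc (κ ω + 1) n, T i ω) ^ 2 ∂P =
      ∑ k ∈ Icc 1 m, (2 * ((n : ℝ) + 1) / ((n : ℝ) - 1)) *
        (1 / (((k : ℝ) + 1) * ((k : ℝ) + 2)) *
          ((∑ i ∈ Icc (k + 1) n, 1 / (i : ℝ)) ^ 2 + ∑ i ∈ Icc (k + 1) n, 1 / (i : ℝ) ^ 2)) := by
    calc ∫ ω, (∑ i ∈ Icc (κ ω + 1) n, T i ω) ^ 2 ∂P
        = ∫ ω, ∑ k ∈ Icc 1 m, (if κ ω = k then (1 : ℝ) else 0) *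
            (∑ i ∈ Icc (k + 1) n, T i ω) ^ 2 ∂P := by
          exact integral_congr_ae (Filter.Eventually.of_forall hpoint)
      _ = ∑ k ∈ Icc 1 m, ∫ ω, (if κ ω = k then (1 : ℝ) else 0) *
            (∑ i ∈ Icc (k + 1) n, T i ω) ^ 2 ∂P :=
          integral_finset_sum _ (fun k _ => (hIndepk k).integrable_mul (hXint k) (hSint k))
      _ = ∑ k ∈ Icc 1 m, (P {ω | κ ω = k}).toReal *
            ((∑ i ∈ Icc (k + 1) n, 1 / (i : ℝ)) ^ 2 + ∑ i ∈ Icc (k + 1) n, 1 / (i : ℝ) ^ 2) := by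
          refine Finset.sum_congr rfl (fun k hk => ?_)
          rw [← hXE k, ← hSE k]
          exact IndepFun.integral_fun_mul_eq_mul_integral (hIndepk k) (hXint k).aestronglyMeasurable (hSint k).aestronglyMeasurable
      _ = ∑ k ∈ Icc 1 m, (2 * ((n : ℝ) + 1) / ((n : ℝ) - 1)) *
            (1 / (((k : ℝ) + 1) * ((k : ℝ) + 2)) *
              ((∑ i ∈ Icc (k + 1) n, 1 / (i : ℝ)) ^ 2 + ∑ i ∈ Icc (k + 1) n, 1 / (i : ℝ) ^ 2)) := by
          refine Finset.sum_congr rfl (fun k hk => ?_)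
          rw [hκdist k hk, ENNReal.toReal_ofReal (hwnonneg k), mul_assoc]
  rw [key, ← Finset.mul_sum]
  have hD := ymx_sumD m
  rw [show ∀ k : ℕ, Icc (k + 1) n = Icc (k + 1) (m + 1) from fun k => rfl] at *
  rw [hD, ← hH1, ← hH2]
  have hm0 : (m : ℝ) ≠ 0 := by
    have : (1 : ℝ) ≤ (m : ℝ) := by exact_mod_cast hm
    linarith
  have hm2 : (m : ℝ) + 2 ≠ 0 := by positivity
  simp only [hn_def]
  push_cast
  field_simp
  ring
end

section
/- With the Yule model setup, E[(U^{(n)} − τ^{(n)})^2] = ((4n+2)/(n-1)) H_{n,2} − 2H_{n,1}^2/(n-1) − 4H_{n,1}/(n-1). -/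
open MeasureTheory ProbabilityTheory Finset Real

section Helpers
open Set
open scoped ENNReal NNReal

lemma expMeasure_eq_wd (r : ℝ) : expMeasure r
    = volume.withDensity (fun x => ((exponentialPDFReal r x).toNNReal : ℝ≥0∞)) := rfl

lemma exponentialPDFReal_eq (r x : ℝ) :
    exponentialPDFReal r x = if 0 ≤ x then r * rexp (-(r * x)) else 0 := by
  rw [exponentialPDFReal, gammaPDFReal]
  simp [Real.rpow_one, Real.Gamma_one]

lemma integrableOn_pow_exp {r : ℝ} (hr : 0 < r) (m : ℕ) :
    IntegrableOn (fun x : ℝ => r * rexp (-(r * x)) * x ^ m) (Ioi 0) := by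
  have h := integrableOn_rpow_mul_exp_neg_mul_rpow (p := 1) (s := m) (b := r)
      (neg_one_lt_zero.trans_le (Nat.cast_nonneg m)) one_pos hr
  have h2 : IntegrableOn (fun x : ℝ => x ^ m * rexp (-(r * x))) (Ioi 0) := by
    refine h.congr_fun (fun x hx => ?_) measurableSet_Ioi
    dsimp only
    rw [Real.rpow_one, Real.rpow_natCast, neg_mul]
  simpa [mul_comm, mul_assoc, mul_left_comm, IntegrableOn] using h2.const_mul r

lemma integrable_pow_expMeasure {r : ℝ} (hr : 0 < r) (m : ℕ) :
    Integrable (fun x : ℝ => x ^ m) (expMeasure r) := by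
  rw [expMeasure_eq_wd,
    integrable_withDensity_iff_integrable_smul ((measurable_exponentialPDFReal r).real_toNNReal)]
  have : (fun x : ℝ => (exponentialPDFReal r x).toNNReal • x ^ m)
      = Set.indicator (Ici 0) (fun x => r * rexp (-(r * x)) * x ^ m) := by
    ext x
    simp only [NNReal.smul_def, smul_eq_mul, Real.coe_toNNReal', exponentialPDFReal_eq,
      Set.indicator_apply, Set.mem_Ici]
    split_ifs with h
    · rw [max_eq_left (by positivity)]
    · simp
  rw [this, integrable_indicator_iff measurableSet_Ici]
  rw [integrableOn_Ici_iff_integrableOn_Ioi]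
  exact integrableOn_pow_exp hr m

lemma integral_pow_expMeasure {r : ℝ} (hr : 0 < r) (m : ℕ) :
    ∫ x, x ^ m ∂(expMeasure r) = (m.factorial : ℝ) / r ^ m := by
  rw [expMeasure_eq_wd,
    integral_withDensity_eq_integral_smul ((measurable_exponentialPDFReal r).real_toNNReal)]
  have : (fun x : ℝ => (exponentialPDFReal r x).toNNReal • x ^ m)
      = Set.indicator (Ici 0) (fun x => r * rexp (-(r * x)) * x ^ m) := by
    ext x
    simp only [NNReal.smul_def, smul_eq_mul, Real.coe_toNNReal', exponentialPDFReal_eq,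
      Set.indicator_apply, Set.mem_Ici]
    split_ifs with h
    · rw [max_eq_left (by positivity)]
    · simp
  rw [this, integral_indicator measurableSet_Ici, integral_Ici_eq_integral_Ioi]
  have hcong : ∀ x ∈ Ioi (0:ℝ), r * rexp (-(r * x)) * x ^ m
      = r * (x ^ ((m : ℝ) + 1 - 1) * rexp (-(r * x))) := by
    intro x hx
    rw [add_sub_cancel_right, Real.rpow_natCast]
    ring
  rw [setIntegral_congr_fun measurableSet_Ioi hcong, integral_const_mul,
    integral_rpow_mul_exp_neg_mul_Ioi (by positivity) hr]
  have h1 : ((m : ℝ) + 1) = ((m + 1 : ℕ) : ℝ) := by push_cast; ring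
  rw [h1, Real.rpow_natCast]
  rw [show (((m + 1 : ℕ)) : ℝ) = (m : ℝ) + 1 from by push_cast; ring,
    Real.Gamma_nat_eq_factorial]
  have hr0 : r ≠ 0 := hr.ne'
  field_simp
  ring_nf
  field_simp
  rw [← mul_pow, mul_one_div_cancel hr0, one_pow]


lemma moment_of_map {Ω : Type*} [MeasurableSpace Ω] {P : Measure Ω} {X : Ω → ℝ}
    (hX : Measurable X) {r : ℝ} (hr : 0 < r) (hmap : P.map X = expMeasure r) (m : ℕ) :
    Integrable (fun ω => X ω ^ m) P ∧ ∫ ω, X ω ^ m ∂P = (m.factorial : ℝ) / r ^ m := by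
  have hpm : Measurable (fun x : ℝ => x ^ m) := measurable_id.pow_const m
  have hint : Integrable (fun x : ℝ => x ^ m) (P.map X) := by
    rw [hmap]; exact integrable_pow_expMeasure hr m
  constructor
  · exact (integrable_map_measure hpm.aestronglyMeasurable hX.aemeasurable).mp hint
  · rw [← integral_map hX.aemeasurable hpm.aestronglyMeasurable, hmap,
      integral_pow_expMeasure hr]



lemma key_identity (m : ℕ) (hm : 1 ≤ m) :
    2 * ((m : ℝ) + 2) * ∑ k ∈ Icc 1 m,
      (1 / (((k : ℝ) + 1) * ((k : ℝ) + 2))) *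
        ((∑ i ∈ Icc 1 k, (1 : ℝ) / i) ^ 2 + ∑ i ∈ Icc 1 k, (1 : ℝ) / (i : ℝ) ^ 2)
    = (4 * ((m : ℝ) + 1) + 2) * (∑ i ∈ Icc 1 (m + 1), (1 : ℝ) / (i : ℝ) ^ 2)
      - 2 * (∑ i ∈ Icc 1 (m + 1), (1 : ℝ) / i) ^ 2
      - 4 * (∑ i ∈ Icc 1 (m + 1), (1 : ℝ) / i) := by
  induction m, hm using Nat.le_induction with
  | base =>
    rw [show Finset.Icc 1 1 = {1} from rfl]
    rw [show Finset.Icc 1 2 = {1, 2} from rfl]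
    norm_num
  | succ m hm ih =>
    rw [Finset.sum_Icc_succ_top (by omega : 1 ≤ m + 1),
      Finset.sum_Icc_succ_top (by omega : 1 ≤ m + 2),
      Finset.sum_Icc_succ_top (by omega : 1 ≤ m + 2)]
    set S : ℝ := ∑ k ∈ Icc 1 m,
      (1 / (((k : ℝ) + 1) * ((k : ℝ) + 2))) *
        ((∑ i ∈ Icc 1 k, (1 : ℝ) / i) ^ 2 + ∑ i ∈ Icc 1 k, (1 : ℝ) / (i : ℝ) ^ 2) with hS
    set A : ℝ := ∑ i ∈ Icc 1 (m + 1), (1 : ℝ) / i with hA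
    set B : ℝ := ∑ i ∈ Icc 1 (m + 1), (1 : ℝ) / (i : ℝ) ^ 2 with hB
    have hm2 : ((m : ℝ) + 2) ≠ 0 := by positivity
    have hm3 : ((m : ℝ) + 3) ≠ 0 := by positivity
    have hSval : S = ((4 * ((m : ℝ) + 1) + 2) * B - 2 * A ^ 2 - 4 * A) / (2 * ((m : ℝ) + 2)) := by
      field_simp
      linarith [ih]
    rw [hSval]
    push_cast
    field_simp
    ring

end Helpers

theorem second_moment_shared_path
    {Ω : Type*} [MeasurableSpace Ω] {P : Measure Ω} [IsProbabilityMeasure P]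
    (n : ℕ) (hn : 2 ≤ n)
    (T : ℕ → Ω → ℝ) (κ : Ω → ℕ)
    (hTmeas : ∀ i, Measurable (T i)) (hκmeas : Measurable κ)
    (hTindep : iIndepFun T P)
    (hTdist : ∀ i ∈ Finset.Icc 1 n, P.map (T i) = expMeasure i)
    (hκrange : ∀ ω, κ ω ∈ Finset.Icc 1 (n - 1))
    (hκdist : ∀ k ∈ Finset.Icc 1 (n - 1),
      P {ω | κ ω = k} =
        ENNReal.ofReal ((2 * ((n : ℝ) + 1) / ((n : ℝ) - 1)) *
          (1 / (((k : ℝ) + 1) * ((k : ℝ) + 2)))))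
    (hindep : IndepFun κ (fun ω i => T i ω) P)
    (H1 H2 : ℝ)
    (hH1 : H1 = ∑ i ∈ Finset.Icc 1 n, (1 : ℝ) / i)
    (hH2 : H2 = ∑ i ∈ Finset.Icc 1 n, (1 : ℝ) / (i : ℝ) ^ 2) :
    ∫ ω, ((∑ i ∈ Finset.Icc 1 n, T i ω) - ∑ i ∈ Finset.Icc (κ ω + 1) n, T i ω) ^ 2 ∂P =
      (4 * (n : ℝ) + 2) / ((n : ℝ) - 1) * H2 - 2 * H1 ^ 2 / ((n : ℝ) - 1) - 4 * H1 / ((n : ℝ) - 1) := by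
  -- moments
  have hipos : ∀ i ∈ Finset.Icc 1 n, (0:ℝ) < i := by
    intro i hi; simp only [Finset.mem_Icc] at hi
    exact_mod_cast Nat.lt_of_lt_of_le Nat.zero_lt_one hi.1
  have hTiInt : ∀ i ∈ Finset.Icc 1 n, Integrable (T i) P := by
    intro i hi
    have := (moment_of_map (hTmeas i) (hipos i hi) (hTdist i hi) 1).1
    simpa using this
  have hETi : ∀ i ∈ Finset.Icc 1 n, ∫ ω, T i ω ∂P = 1 / i := by
    intro i hi
    have := (moment_of_map (hTmeas i) (hipos i hi) (hTdist i hi) 1).2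
    simpa using this
  have hprodInt : ∀ i ∈ Finset.Icc 1 n, ∀ j ∈ Finset.Icc 1 n,
      Integrable (fun ω => T i ω * T j ω) P := by
    intro i hi j hj
    rcases eq_or_ne i j with rfl | hij
    · have := (moment_of_map (hTmeas i) (hipos i hi) (hTdist i hi) 2).1
      simpa [pow_two] using this
    · exact (hTindep.indepFun hij).integrable_mul (hTiInt i hi) (hTiInt j hj)
  have hprodE : ∀ i ∈ Finset.Icc 1 n, ∀ j ∈ Finset.Icc 1 n,
      ∫ ω, T i ω * T j ω ∂P = (1 / i) * (1 / j) + if i = j then 1 / (i:ℝ)^2 else 0 := by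
    intro i hi j hj
    rcases eq_or_ne i j with rfl | hij
    · have := (moment_of_map (hTmeas i) (hipos i hi) (hTdist i hi) 2).2
      simp only [pow_two] at this
      rw [this]
      simp only [if_pos rfl]
      norm_num
      ring
    · have h := (hTindep.indepFun hij).integral_mul_eq_mul_integral (hTiInt i hi).aestronglyMeasurable (hTiInt j hj).aestronglyMeasurable
      rw [show (T i * T j) = fun ω => T i ω * T j ω from rfl] at h
      rw [h, hETi i hi, hETi j hj, if_neg hij, add_zero]
  -- second moment of partial sums
  have hInth : ∀ k, k ≤ n → Integrable (fun ω => (∑ i ∈ Finset.Icc 1 k, T i ω)^2) P := by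
    intro k hk
    have hsub : Finset.Icc 1 k ⊆ Finset.Icc 1 n := Finset.Icc_subset_Icc_right hk
    have heq : (fun ω => (∑ i ∈ Finset.Icc 1 k, T i ω)^2)
        = fun ω => ∑ i ∈ Finset.Icc 1 k, ∑ j ∈ Finset.Icc 1 k, T i ω * T j ω := by
      ext ω; rw [pow_two, Finset.sum_mul_sum]
    rw [heq]
    exact integrable_finset_sum _ fun i hi => integrable_finset_sum _ fun j hj =>
      hprodInt i (hsub hi) j (hsub hj)
  have hEhk : ∀ k, k ≤ n → ∫ ω, (∑ i ∈ Finset.Icc 1 k, T i ω)^2 ∂P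
      = (∑ i ∈ Finset.Icc 1 k, (1:ℝ) / i)^2 + ∑ i ∈ Finset.Icc 1 k, (1:ℝ) / (i:ℝ)^2 := by
    intro k hk
    have hsub : Finset.Icc 1 k ⊆ Finset.Icc 1 n := Finset.Icc_subset_Icc_right hk
    have heq : (fun ω => (∑ i ∈ Finset.Icc 1 k, T i ω)^2)
        = fun ω => ∑ i ∈ Finset.Icc 1 k, ∑ j ∈ Finset.Icc 1 k, T i ω * T j ω := by
      ext ω; rw [pow_two, Finset.sum_mul_sum]
    rw [heq, integral_finset_sum _ fun i hi => integrable_finset_sum _ fun j hj =>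
      hprodInt i (hsub hi) j (hsub hj)]
    have : ∀ i ∈ Finset.Icc 1 k, ∫ ω, ∑ j ∈ Finset.Icc 1 k, T i ω * T j ω ∂P
        = ∑ j ∈ Finset.Icc 1 k, ((1 / (i:ℝ)) * (1 / (j:ℝ)) + if i = j then 1 / (i:ℝ)^2 else 0) := by
      intro i hi
      rw [integral_finset_sum _ fun j hj => hprodInt i (hsub hi) j (hsub hj)]
      exact Finset.sum_congr rfl fun j hj => hprodE i (hsub hi) j (hsub hj)
    rw [Finset.sum_congr rfl this]
    simp only [Finset.sum_add_distrib, Finset.sum_ite_eq]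
    rw [← Finset.sum_mul_sum]
    congr 1
    · rw [pow_two]
    · exact Finset.sum_congr rfl fun i hi => by rw [if_pos hi]
  -- Step 1: pointwise rewrite of the integrand
  have hpt : ∀ ω, ((∑ i ∈ Finset.Icc 1 n, T i ω) - ∑ i ∈ Finset.Icc (κ ω + 1) n, T i ω) ^ 2
      = ∑ k ∈ Finset.Icc 1 (n-1),
        ({ω' | κ ω' = k}.indicator (fun ω' => (∑ i ∈ Finset.Icc 1 k, T i ω')^2)) ω := by
    intro ω
    have hκω := hκrange ω
    simp only [Finset.mem_Icc] at hκω
    have hκn : κ ω ≤ n := le_trans hκω.2 (Nat.sub_le n 1)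
    have hsplit : (∑ i ∈ Finset.Icc 1 (κ ω), T i ω) + ∑ i ∈ Finset.Icc (κ ω + 1) n, T i ω
        = ∑ i ∈ Finset.Icc 1 n, T i ω := by
      rw [show Finset.Icc 1 (κ ω) = Finset.Ioc 0 (κ ω) from rfl,
        show Finset.Icc (κ ω + 1) n = Finset.Ioc (κ ω) n by rw [Finset.Icc_add_one_left_eq_Ioc],
        show Finset.Icc 1 n = Finset.Ioc 0 n from rfl]
      exact Finset.sum_Ioc_consecutive _ (Nat.zero_le _) hκn
    have hdiff : (∑ i ∈ Finset.Icc 1 n, T i ω) - ∑ i ∈ Finset.Icc (κ ω + 1) n, T i ω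
        = ∑ i ∈ Finset.Icc 1 (κ ω), T i ω := by linarith
    rw [hdiff]
    rw [Finset.sum_congr rfl (fun k _ => Set.indicator_apply _ _ _)]
    simp only [Set.mem_setOf_eq]
    rw [Finset.sum_ite_eq (Finset.Icc 1 (n-1)) (κ ω)
      (fun k => (∑ i ∈ Finset.Icc 1 k, T i ω)^2)]
    rw [if_pos (hκrange ω)]
  simp_rw [hpt]
  -- Step 2: swap integral and sum
  have hkn : ∀ k ∈ Finset.Icc 1 (n-1), k ≤ n := by
    intro k hk; simp only [Finset.mem_Icc] at hk; omega
  have hmeasset : ∀ k : ℕ, MeasurableSet {ω' | κ ω' = k} := by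
    intro k; exact hκmeas (measurableSet_singleton k)
  rw [integral_finset_sum _ fun k hk =>
    ((hInth k (hkn k hk)).indicator (hmeasset k))]
  -- Step 3: each term factorizes by independence
  have hterm : ∀ k ∈ Finset.Icc 1 (n-1),
      ∫ ω, ({ω' | κ ω' = k}.indicator (fun ω' => (∑ i ∈ Finset.Icc 1 k, T i ω')^2)) ω ∂P
      = ((2 * ((n : ℝ) + 1) / ((n : ℝ) - 1)) * (1 / (((k : ℝ) + 1) * ((k : ℝ) + 2)))) *
        ((∑ i ∈ Finset.Icc 1 k, (1:ℝ) / i)^2 + ∑ i ∈ Finset.Icc 1 k, (1:ℝ) / (i:ℝ)^2) := by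
    intro k hk
    set φ : ℕ → ℝ := fun j => if j = k then (1:ℝ) else 0 with hφ
    set ψ : (ℕ → ℝ) → ℝ := fun f => (∑ i ∈ Finset.Icc 1 k, f i)^2 with hψ
    have hφm : Measurable φ := measurable_from_top
    have hψm : Measurable ψ := by
      exact (Finset.measurable_sum _ fun i _ => measurable_pi_apply i).pow_const 2
    have hcomp : IndepFun (fun ω => φ (κ ω)) (fun ω => ψ (fun i => T i ω)) P :=
      hindep.comp hφm hψm
    have heq1 : ({ω' | κ ω' = k}.indicator (fun ω' => (∑ i ∈ Finset.Icc 1 k, T i ω')^2))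
        = fun ω => φ (κ ω) * ψ (fun i => T i ω) := by
      ext ω
      simp only [Set.indicator_apply, Set.mem_setOf_eq, hφ, hψ]
      split_ifs with h
      · rw [one_mul]
      · rw [zero_mul]
    have heq1' : ∫ ω, ({ω' | κ ω' = k}.indicator (fun ω' => (∑ i ∈ Finset.Icc 1 k, T i ω')^2)) ω ∂P
        = ∫ ω, φ (κ ω) * ψ (fun i => T i ω) ∂P := congrArg (integral P) heq1
    have hφκm : Measurable fun ω => φ (κ ω) := hφm.comp hκmeas
    have hψTm : Measurable fun ω => ψ (fun i => T i ω) := by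
      exact hψm.comp (measurable_pi_lambda _ fun i => hTmeas i)
    have hmul : ∫ ω, φ (κ ω) * ψ (fun i => T i ω) ∂P
        = (∫ ω, φ (κ ω) ∂P) * ∫ ω, ψ (fun i => T i ω) ∂P :=
      hcomp.integral_fun_mul_eq_mul_integral hφκm.aestronglyMeasurable hψTm.aestronglyMeasurable
    rw [heq1', hmul]
    have hφint : ∫ ω, φ (κ ω) ∂P = ((2 * ((n : ℝ) + 1) / ((n : ℝ) - 1)) *
        (1 / (((k : ℝ) + 1) * ((k : ℝ) + 2)))) := by
      have : (fun ω => φ (κ ω)) = {ω' | κ ω' = k}.indicator (fun _ => (1:ℝ)) := by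
        ext ω; simp [hφ, Set.indicator_apply]
      rw [this, integral_indicator (hmeasset k)]
      simp only [integral_const, smul_eq_mul, mul_one]
      rw [measureReal_def, Measure.restrict_apply_univ, hκdist k hk, ENNReal.toReal_ofReal]
      have hn1 : (0:ℝ) < (n:ℝ) - 1 := by
        have : (2:ℝ) ≤ n := by exact_mod_cast hn
        linarith
      positivity
    rw [hφint]
    congr 1
    exact hEhk k (hkn k hk)
  rw [Finset.sum_congr rfl hterm]
  obtain ⟨m, rfl⟩ : ∃ m, n = m + 1 := ⟨n - 1, by omega⟩
  have hm : 1 ≤ m := by omega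
  simp only [Nat.add_sub_cancel] at *
  have key := key_identity m hm
  simp only [mul_assoc]
  rw [← Finset.mul_sum]
  set X : ℝ := ∑ k ∈ Finset.Icc 1 m,
      (1 / (((k : ℝ) + 1) * ((k : ℝ) + 2))) *
        ((∑ i ∈ Finset.Icc 1 k, (1 : ℝ) / i) ^ 2 + ∑ i ∈ Finset.Icc 1 k, (1 : ℝ) / (i : ℝ) ^ 2)
    with hXdef
  rw [hH1, hH2] at *
  have hc : (1:ℝ) ≤ (m:ℝ) := by exact_mod_cast hm
  have hc0 : (m:ℝ) ≠ 0 := by linarith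
  have hc2 : (m:ℝ) + 2 ≠ 0 := by linarith
  have hX : X = ((4 * ((m:ℝ) + 1) + 2) * (∑ i ∈ Finset.Icc 1 (m+1), (1 : ℝ) / (i : ℝ) ^ 2)
      - 2 * (∑ i ∈ Finset.Icc 1 (m+1), (1 : ℝ) / i) ^ 2
      - 4 * (∑ i ∈ Finset.Icc 1 (m+1), (1 : ℝ) / i)) / (2 * ((m:ℝ) + 2)) := by
    field_simp
    linarith [key]
  rw [hX]
  push_cast
  field_simp
  ring
end

section
/- With the Yule model setup, E[U^{(n)}(U^{(n)} − τ^{(n)})] = (2n/(n-1))(H_{n,1} + H_{n,2} − 1 − H_{n,1}^2/n). -/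
open MeasureTheory ProbabilityTheory Finset Real

open scoped ENNReal NNReal


lemma pdf_pow_integrableOn_Ioi {r : ℝ} (hr : 0 < r) (p : ℕ) :
    IntegrableOn (fun x : ℝ => r * rexp (-(r * x)) * x ^ p) (Set.Ioi 0) := by
  have h := integrableOn_rpow_mul_exp_neg_mul_rpow (s := (p : ℝ)) (p := 1) (b := r)
    (lt_of_lt_of_le neg_one_lt_zero (Nat.cast_nonneg p)) one_pos hr
  have h2 : IntegrableOn (fun x : ℝ => x ^ p * rexp (-(r * x))) (Set.Ioi 0) :=
    h.congr_fun (fun x hx => by show x ^ (p:ℝ) * rexp (-r * x ^ (1:ℝ)) = _; rw [Real.rpow_one, Real.rpow_natCast, neg_mul]) measurableSet_Ioi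
  have h3 := Integrable.const_mul h2 r
  exact IntegrableOn.congr_fun h3 (fun x hx => by ring) measurableSet_Ioi

lemma pdf_pow_integrable {r : ℝ} (hr : 0 < r) (p : ℕ) :
    Integrable (fun x : ℝ => exponentialPDFReal r x * x ^ p) := by
  have hIci : IntegrableOn (fun x : ℝ => exponentialPDFReal r x * x ^ p) (Set.Ici 0) := by
    rw [integrableOn_Ici_iff_integrableOn_Ioi]
    refine (pdf_pow_integrableOn_Ioi hr p).congr_fun (fun x hx => ?_) measurableSet_Ioi
    rw [exponentialPDFReal, gammaPDFReal, if_pos (le_of_lt hx)]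
    simp [Real.Gamma_one]
  have hIio : IntegrableOn (fun x : ℝ => exponentialPDFReal r x * x ^ p) (Set.Iio 0) := by
    refine (integrableOn_zero).congr_fun (fun x hx => ?_) measurableSet_Iio
    rw [exponentialPDFReal, gammaPDFReal, if_neg (not_le.mpr hx), zero_mul]
  have := hIio.union hIci
  rwa [Set.Iio_union_Ici, integrableOn_univ] at this

lemma expMeasure_eq (r : ℝ) : expMeasure r =
    (volume : Measure ℝ).withDensity (fun x => ((exponentialPDFReal r x).toNNReal : ℝ≥0∞)) := rfl

lemma pow_integrable_expMeasure {r : ℝ} (hr : 0 < r) (p : ℕ)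
    (hint : Integrable (fun x : ℝ => exponentialPDFReal r x * x ^ p)) :
    Integrable (fun x : ℝ => x ^ p) (expMeasure r) := by
  rw [expMeasure_eq,
    integrable_withDensity_iff_integrable_smul ((measurable_exponentialPDFReal r).real_toNNReal)]
  refine hint.congr (Filter.Eventually.of_forall fun x => ?_)
  show exponentialPDFReal r x * x ^ p = (exponentialPDFReal r x).toNNReal • x ^ p
  rw [NNReal.smul_def, smul_eq_mul, Real.coe_toNNReal _ (exponentialPDFReal_nonneg hr x)]

lemma integral_pow_expMeasure_s9 {r : ℝ} (hr : 0 < r) (p : ℕ)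
    (hint : Integrable (fun x : ℝ => exponentialPDFReal r x * x ^ p)) :
    ∫ x, x ^ p ∂(expMeasure r) = (p.factorial : ℝ) / r ^ p := by
  rw [expMeasure_eq,
    integral_withDensity_eq_integral_smul ((measurable_exponentialPDFReal r).real_toNNReal)]
  have heq : ∀ x : ℝ, (exponentialPDFReal r x).toNNReal • (x ^ p)
      = exponentialPDFReal r x * x ^ p := fun x => by
    rw [NNReal.smul_def, smul_eq_mul, Real.coe_toNNReal _ (exponentialPDFReal_nonneg hr x)]
  rw [integral_congr_ae (Filter.Eventually.of_forall heq)]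
  rw [← integral_add_compl measurableSet_Ici (hint)]
  have h0 : ∫ x in (Set.Ici (0:ℝ))ᶜ, exponentialPDFReal r x * x ^ p = 0 := by
    rw [Set.compl_Ici]
    rw [setIntegral_congr_fun measurableSet_Iio (g := fun _ => (0:ℝ))
      (fun x hx => by rw [exponentialPDFReal, gammaPDFReal, if_neg (not_le.mpr hx), zero_mul])]
    simp
  rw [h0, add_zero, integral_Ici_eq_integral_Ioi]
  rw [setIntegral_congr_fun measurableSet_Ioi
    (g := fun x : ℝ => r * (x ^ (((p:ℝ) + 1) - 1) * rexp (-(r * x))))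
    (fun x hx => by
      show _ = r * (x ^ (((p:ℝ) + 1) - 1) * rexp (-(r * x)))
      rw [exponentialPDFReal, gammaPDFReal, if_pos (le_of_lt hx)]
      rw [show ((p:ℝ) + 1 - 1) = ((p:ℕ):ℝ) by push_cast; ring, Real.rpow_natCast,
        Real.rpow_one]
      simp only [Real.Gamma_one, div_one, sub_self, Real.rpow_zero, mul_one]
      ring)]
  rw [integral_const_mul, integral_rpow_mul_exp_neg_mul_Ioi (by positivity) hr,
    Real.Gamma_nat_eq_factorial,
    show ((p:ℝ) + 1) = ((p + 1 : ℕ):ℝ) by push_cast; ring, Real.rpow_natCast]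
  field_simp
  rw [one_div, inv_pow, pow_succ]; field_simp [hr.ne']

section
variable {Ω : Type*} [MeasurableSpace Ω] {P : Measure Ω} [IsProbabilityMeasure P]

lemma momentT {T : Ω → ℝ} {i : ℕ} (hi : 1 ≤ i) (hmeas : Measurable T)
    (hdist : P.map T = expMeasure i) (p : ℕ) :
    Integrable (fun ω => T ω ^ p) P ∧
      ∫ ω, T ω ^ p ∂P = (p.factorial : ℝ) / (i : ℝ) ^ p := by
  have hpos : (0:ℝ) < (i:ℝ) := by exact_mod_cast hi
  have hsm : AEStronglyMeasurable (fun x : ℝ => x ^ p) (P.map T) :=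
    (measurable_id.pow_const p).aestronglyMeasurable
  have hint : Integrable (fun x : ℝ => x ^ p) (P.map T) := by
    rw [hdist]; exact pow_integrable_expMeasure hpos p (pdf_pow_integrable hpos p)
  constructor
  · exact (integrable_map_measure hsm hmeas.aemeasurable).mp hint
  · rw [← integral_map hmeas.aemeasurable hsm, hdist]
    exact integral_pow_expMeasure_s9 hpos p (pdf_pow_integrable hpos p)

lemma prodT {T : ℕ → Ω → ℝ} (hTmeas : ∀ i, Measurable (T i))
    (hTindep : iIndepFun T P)
    {n : ℕ} (hTdist : ∀ i ∈ Finset.Icc 1 n, P.map (T i) = expMeasure i)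
    {i j : ℕ} (hi : i ∈ Finset.Icc 1 n) (hj : j ∈ Finset.Icc 1 n) :
    Integrable (fun ω => T i ω * T j ω) P ∧
      ∫ ω, T i ω * T j ω ∂P =
        (1 / (i:ℝ)) * (1 / (j:ℝ)) + (if i = j then 1 / (i:ℝ)^2 else 0) := by
  have hi1 : 1 ≤ i := (Finset.mem_Icc.mp hi).1
  have hj1 : 1 ≤ j := (Finset.mem_Icc.mp hj).1
  rcases eq_or_ne i j with rfl | hne
  · have h2 := momentT hi1 (hTmeas i) (hTdist i hi) 2
    constructor
    · exact h2.1.congr (Filter.Eventually.of_forall fun ω => by ring)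
    · rw [show (fun ω => T i ω * T i ω) = fun ω => T i ω ^ 2 by funext ω; ring, h2.2]
      have : ((i:ℝ)) ≠ 0 := by positivity
      rw [if_pos rfl]
      norm_num [Nat.factorial]
      ring
  · have hIF : IndepFun (T i) (T j) P := hTindep.indepFun hne
    have h1i := momentT hi1 (hTmeas i) (hTdist i hi) 1
    have h1j := momentT hj1 (hTmeas j) (hTdist j hj) 1
    simp only [pow_one] at h1i h1j
    have hInt : Integrable (fun ω => T i ω * T j ω) P := hIF.integrable_mul h1i.1 h1j.1
    refine ⟨hInt, ?_⟩
    rw [if_neg hne, add_zero]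
    have heq : ∫ ω, T i ω * T j ω ∂P = (∫ ω, T i ω ∂P) * ∫ ω, T j ω ∂P :=
      hIF.integral_fun_mul_eq_mul_integral h1i.1.1 h1j.1.1
    rw [heq, h1i.2, h1j.2]
    norm_num

end

section
variable {Ω : Type*} [MeasurableSpace Ω] {P : Measure Ω} [IsProbabilityMeasure P]

lemma USk {T : ℕ → Ω → ℝ} (hTmeas : ∀ i, Measurable (T i))
    (hTindep : iIndepFun T P)
    {n : ℕ} (hTdist : ∀ i ∈ Finset.Icc 1 n, P.map (T i) = expMeasure i)
    {k : ℕ} (hk : k ≤ n) :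
    Integrable (fun ω => (∑ i ∈ Finset.Icc 1 n, T i ω) * (∑ j ∈ Finset.Icc 1 k, T j ω)) P ∧
      ∫ ω, (∑ i ∈ Finset.Icc 1 n, T i ω) * (∑ j ∈ Finset.Icc 1 k, T j ω) ∂P =
        (∑ j ∈ Finset.Icc 1 k, 1 / (j:ℝ)^2) +
          (∑ i ∈ Finset.Icc 1 n, 1 / (i:ℝ)) * (∑ j ∈ Finset.Icc 1 k, 1 / (j:ℝ)) := by
  have hsub : ∀ j ∈ Finset.Icc 1 k, j ∈ Finset.Icc 1 n := fun j hj =>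
    Finset.mem_Icc.mpr ⟨(Finset.mem_Icc.mp hj).1, le_trans (Finset.mem_Icc.mp hj).2 hk⟩
  have hexp : (fun ω => (∑ i ∈ Finset.Icc 1 n, T i ω) * (∑ j ∈ Finset.Icc 1 k, T j ω))
      = fun ω => ∑ i ∈ Finset.Icc 1 n, ∑ j ∈ Finset.Icc 1 k, T i ω * T j ω := by
    funext ω; rw [Finset.sum_mul_sum]
  have hint : ∀ i ∈ Finset.Icc 1 n, ∀ j ∈ Finset.Icc 1 k,
      Integrable (fun ω => T i ω * T j ω) P := fun i hi j hj =>
    (prodT hTmeas hTindep hTdist hi (hsub j hj)).1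
  have hInt : Integrable
      (fun ω => ∑ i ∈ Finset.Icc 1 n, ∑ j ∈ Finset.Icc 1 k, T i ω * T j ω) P :=
    integrable_finset_sum _ fun i hi => integrable_finset_sum _ fun j hj => hint i hi j hj
  constructor
  · rw [hexp]; exact hInt
  · rw [hexp, integral_finset_sum _ fun i hi =>
      integrable_finset_sum _ fun j hj => hint i hi j hj]
    have : ∀ i ∈ Finset.Icc 1 n,
        ∫ ω, (∑ j ∈ Finset.Icc 1 k, T i ω * T j ω) ∂P
          = ∑ j ∈ Finset.Icc 1 k, ((1/(i:ℝ)) * (1/(j:ℝ)) + if i = j then 1/(i:ℝ)^2 else 0) := by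
      intro i hi
      rw [integral_finset_sum _ fun j hj => hint i hi j hj]
      exact Finset.sum_congr rfl fun j hj =>
        (prodT hTmeas hTindep hTdist hi (hsub j hj)).2
    rw [Finset.sum_congr rfl this, Finset.sum_comm]
    have hjline : ∀ j ∈ Finset.Icc 1 k,
        (∑ i ∈ Finset.Icc 1 n, ((1/(i:ℝ)) * (1/(j:ℝ)) + if i = j then 1/(i:ℝ)^2 else 0))
          = (∑ i ∈ Finset.Icc 1 n, 1/(i:ℝ)) * (1/(j:ℝ)) + 1/(j:ℝ)^2 := by
      intro j hj
      rw [Finset.sum_add_distrib, ← Finset.sum_mul]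
      congr 1
      have : ∀ i ∈ Finset.Icc 1 n, (if i = j then 1/(i:ℝ)^2 else 0)
          = (if i = j then 1/(j:ℝ)^2 else 0) := by
        intro i hi
        by_cases h : i = j
        · simp [h]
        · simp [h]
      rw [Finset.sum_congr rfl this, Finset.sum_ite_eq' (Finset.Icc 1 n) j fun _ => 1/(j:ℝ)^2,
        if_pos (hsub j hj)]
    rw [Finset.sum_congr rfl hjline, Finset.sum_add_distrib, ← Finset.mul_sum]
    ring
end

lemma telA (m : ℕ) :
    ∑ k ∈ Finset.Icc 1 m, (1 / (((k:ℝ)+1)*((k:ℝ)+2))) * (∑ i ∈ Finset.Icc 1 k, (1:ℝ)/(i:ℝ))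
      = 1 - 1/((m:ℝ)+1) - (∑ i ∈ Finset.Icc 1 m, (1:ℝ)/(i:ℝ))/((m:ℝ)+2) := by
  induction m with
  | zero => simp
  | succ m ih =>
    rw [Finset.sum_Icc_succ_top (Nat.le_add_left 1 m), ih,
      Finset.sum_Icc_succ_top (Nat.le_add_left 1 m)]
    have h1 : ((m:ℝ)+1) ≠ 0 := by positivity
    have h2 : ((m:ℝ)+2) ≠ 0 := by positivity
    have h3 : ((m:ℝ)+3) ≠ 0 := by positivity
    push_cast
    field_simp
    ring

lemma telB (m : ℕ) :
    ∑ k ∈ Finset.Icc 1 m, (1 / (((k:ℝ)+1)*((k:ℝ)+2))) * (∑ i ∈ Finset.Icc 1 k, (1:ℝ)/(i:ℝ)^2)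
      = (∑ i ∈ Finset.Icc 1 m, (1:ℝ)/(i:ℝ)^2) - 1 + 1/((m:ℝ)+1)
        - (∑ i ∈ Finset.Icc 1 m, (1:ℝ)/(i:ℝ)^2)/((m:ℝ)+2) := by
  induction m with
  | zero => simp
  | succ m ih =>
    rw [Finset.sum_Icc_succ_top (Nat.le_add_left 1 m), ih,
      Finset.sum_Icc_succ_top (Nat.le_add_left 1 m)]
    have h1 : ((m:ℝ)+1) ≠ 0 := by positivity
    have h2 : ((m:ℝ)+2) ≠ 0 := by positivity
    have h3 : ((m:ℝ)+3) ≠ 0 := by positivity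
    push_cast
    field_simp
    ring

theorem cross_moment_height_shared_path
    {Ω : Type*} [MeasurableSpace Ω] {P : Measure Ω} [IsProbabilityMeasure P]
    (n : ℕ) (hn : 2 ≤ n)
    (T : ℕ → Ω → ℝ) (κ : Ω → ℕ)
    (hTmeas : ∀ i, Measurable (T i)) (hκmeas : Measurable κ)
    (hTindep : iIndepFun T P)
    (hTdist : ∀ i ∈ Finset.Icc 1 n, P.map (T i) = expMeasure i)
    (hκrange : ∀ ω, κ ω ∈ Finset.Icc 1 (n - 1))
    (hκdist : ∀ k ∈ Finset.Icc 1 (n - 1),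
      P {ω | κ ω = k} =
        ENNReal.ofReal ((2 * ((n : ℝ) + 1) / ((n : ℝ) - 1)) *
          (1 / (((k : ℝ) + 1) * ((k : ℝ) + 2)))))
    (hindep : IndepFun κ (fun ω i => T i ω) P)
    (H1 H2 : ℝ)
    (hH1 : H1 = ∑ i ∈ Finset.Icc 1 n, (1 : ℝ) / i)
    (hH2 : H2 = ∑ i ∈ Finset.Icc 1 n, (1 : ℝ) / (i : ℝ) ^ 2) :
    ∫ ω, (∑ i ∈ Finset.Icc 1 n, T i ω) *
        ((∑ i ∈ Finset.Icc 1 n, T i ω) - ∑ i ∈ Finset.Icc (κ ω + 1) n, T i ω) ∂P =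
      2 * (n : ℝ) / ((n : ℝ) - 1) * (H1 + H2 - 1 - H1 ^ 2 / (n : ℝ)) := by
  have hnR : (1:ℝ) < (n:ℝ) := by exact_mod_cast hn.trans_lt' one_lt_two
  -- pointwise decomposition
  have hpt : ∀ ω, (∑ i ∈ Finset.Icc 1 n, T i ω) *
      ((∑ i ∈ Finset.Icc 1 n, T i ω) - ∑ i ∈ Finset.Icc (κ ω + 1) n, T i ω)
      = ∑ k ∈ Finset.Icc 1 (n-1), Set.indicator {ω' | κ ω' = k}
          (fun ω' => (∑ i ∈ Finset.Icc 1 n, T i ω') * (∑ i ∈ Finset.Icc 1 k, T i ω')) ω := by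
    intro ω
    have hk0 := hκrange ω
    have hk0n : κ ω ≤ n := le_trans (Finset.mem_Icc.mp hk0).2 (Nat.sub_le n 1)
    have hsplit : (∑ i ∈ Finset.Icc 1 (κ ω), T i ω) + ∑ i ∈ Finset.Icc (κ ω + 1) n, T i ω
        = ∑ i ∈ Finset.Icc 1 n, T i ω := by
      rw [show Finset.Icc 1 (κ ω) = Finset.Ioc 0 (κ ω) from Finset.Icc_add_one_left_eq_Ioc 0 _,
        show Finset.Icc (κ ω + 1) n = Finset.Ioc (κ ω) n from Finset.Icc_add_one_left_eq_Ioc _ _,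
        show Finset.Icc 1 n = Finset.Ioc 0 n from Finset.Icc_add_one_left_eq_Ioc 0 _]
      exact Finset.sum_Ioc_consecutive _ (Nat.zero_le _) hk0n
    have hrhs : ∑ k ∈ Finset.Icc 1 (n-1), Set.indicator {ω' | κ ω' = k}
          (fun ω' => (∑ i ∈ Finset.Icc 1 n, T i ω') * (∑ i ∈ Finset.Icc 1 k, T i ω')) ω
        = (∑ i ∈ Finset.Icc 1 n, T i ω) * (∑ i ∈ Finset.Icc 1 (κ ω), T i ω) := by
      have : ∀ k, Set.indicator {ω' | κ ω' = k}
          (fun ω' => (∑ i ∈ Finset.Icc 1 n, T i ω') * (∑ i ∈ Finset.Icc 1 k, T i ω')) ω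
          = if κ ω = k then (∑ i ∈ Finset.Icc 1 n, T i ω) * (∑ i ∈ Finset.Icc 1 k, T i ω)
            else 0 := fun k => by
        rw [Set.indicator_apply]; rfl
      rw [Finset.sum_congr rfl fun k _ => this k,
        Finset.sum_ite_eq (Finset.Icc 1 (n-1)) (κ ω)
          (fun k => (∑ i ∈ Finset.Icc 1 n, T i ω) * (∑ i ∈ Finset.Icc 1 k, T i ω)),
        if_pos hk0]
    rw [hrhs, ← hsplit]; ring
  rw [integral_congr_ae (Filter.Eventually.of_forall hpt)]
  -- integrability pieces
  have hmk : ∀ k : ℕ, MeasurableSet {ω' | κ ω' = k} := fun k =>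
    hκmeas (measurableSet_singleton k)
  have hUS : ∀ k ∈ Finset.Icc 1 (n-1),
      Integrable (fun ω => (∑ i ∈ Finset.Icc 1 n, T i ω) * (∑ i ∈ Finset.Icc 1 k, T i ω)) P
      := fun k hk => (USk hTmeas hTindep hTdist
        (le_trans (Finset.mem_Icc.mp hk).2 (Nat.sub_le n 1))).1
  rw [integral_finset_sum _ fun k hk => ((hUS k hk).indicator (hmk k))]
  -- per-k integral via independence
  have hone : ∀ k ∈ Finset.Icc 1 (n-1),
      ∫ ω, Set.indicator {ω' | κ ω' = k}
          (fun ω' => (∑ i ∈ Finset.Icc 1 n, T i ω') * (∑ i ∈ Finset.Icc 1 k, T i ω')) ω ∂P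
        = (2 * ((n:ℝ)+1) / ((n:ℝ)-1)) * (1 / (((k:ℝ)+1)*((k:ℝ)+2)))
            * ((∑ j ∈ Finset.Icc 1 k, 1/(j:ℝ)^2)
              + (∑ i ∈ Finset.Icc 1 n, 1/(i:ℝ)) * (∑ j ∈ Finset.Icc 1 k, 1/(j:ℝ))) := by
    intro k hk
    have hkn : k ≤ n := le_trans (Finset.mem_Icc.mp hk).2 (Nat.sub_le n 1)
    set φ : ℕ → ℝ := fun m => if m = k then 1 else 0 with hφdef
    set ψ : (ℕ → ℝ) → ℝ :=
      fun v => (∑ i ∈ Finset.Icc 1 n, v i) * (∑ i ∈ Finset.Icc 1 k, v i) with hψdef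
    have hφ : Measurable φ := measurable_from_top
    have hψ : Measurable ψ :=
      (Finset.measurable_sum _ fun i _ => measurable_pi_apply i).mul
        (Finset.measurable_sum _ fun i _ => measurable_pi_apply i)
    have hIF : IndepFun (fun ω => φ (κ ω)) (fun ω => ψ (fun i => T i ω)) P :=
      hindep.comp hφ hψ
    have hint1 : Integrable (fun ω => φ (κ ω)) P := by
      refine ((integrable_const (1:ℝ)).indicator (hmk k)).congr
        (Filter.Eventually.of_forall fun ω => ?_)
      simp only [Set.indicator_apply, Set.mem_setOf_eq, hφdef]
    have hint2 : Integrable (fun ω => ψ (fun i => T i ω)) P :=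
      (USk hTmeas hTindep hTdist hkn).1
    have hmul := hIF.integral_fun_mul_eq_mul_integral hint1.1 hint2.1
    have hlhs : (fun ω => Set.indicator {ω' | κ ω' = k}
          (fun ω' => (∑ i ∈ Finset.Icc 1 n, T i ω') * (∑ i ∈ Finset.Icc 1 k, T i ω')) ω)
        = fun ω => φ (κ ω) * ψ (fun i => T i ω) := by
      funext ω
      rw [Set.indicator_apply, hφdef, hψdef]
      by_cases h : κ ω = k
      · simp only [Set.mem_setOf_eq, if_pos h, one_mul]
      · simp only [Set.mem_setOf_eq, if_neg h, zero_mul]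
    rw [hlhs]
    have hmul' : ∫ ω, φ (κ ω) * ψ (fun i => T i ω) ∂P
        = (∫ ω, φ (κ ω) ∂P) * ∫ ω, ψ (fun i => T i ω) ∂P := hmul
    rw [hmul']
    have hP1 : ∫ ω, φ (κ ω) ∂P
        = (2 * ((n:ℝ)+1) / ((n:ℝ)-1)) * (1 / (((k:ℝ)+1)*((k:ℝ)+2))) := by
      have : (fun ω => φ (κ ω))
          = Set.indicator {ω' | κ ω' = k} (fun _ => (1:ℝ)) := by
        funext ω
        simp only [Set.indicator_apply, Set.mem_setOf_eq, hφdef]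
      rw [this, integral_indicator_const (1:ℝ) (hmk k), measureReal_def, hκdist k hk, smul_eq_mul, mul_one,
        ENNReal.toReal_ofReal]
      have h1 : (0:ℝ) < (n:ℝ) - 1 := by linarith
      positivity
    rw [hP1, (USk hTmeas hTindep hTdist hkn).2]
  rw [Finset.sum_congr rfl hone]
  -- final algebra
  obtain ⟨m, rfl⟩ : ∃ m, n = m + 1 := ⟨n - 1, by omega⟩
  have hm1 : 1 ≤ m := by omega
  simp only [Nat.add_sub_cancel] at *
  set C : ℝ := 2 * (((m:ℕ):ℝ)+1+1) / (((m:ℝ)+1)-1) with hC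
  have hstep : ∀ k ∈ Finset.Icc 1 m,
      (2 * (((m+1:ℕ):ℝ)+1) / ((((m+1:ℕ)):ℝ)-1)) * (1 / (((k:ℝ)+1)*((k:ℝ)+2)))
          * ((∑ j ∈ Finset.Icc 1 k, 1/(j:ℝ)^2)
            + (∑ i ∈ Finset.Icc 1 (m+1), 1/(i:ℝ)) * (∑ j ∈ Finset.Icc 1 k, 1/(j:ℝ)))
        = C * ((1 / (((k:ℝ)+1)*((k:ℝ)+2))) * (∑ j ∈ Finset.Icc 1 k, (1:ℝ)/(j:ℝ)^2))
          + (C * (∑ i ∈ Finset.Icc 1 (m+1), 1/(i:ℝ)))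
            * ((1 / (((k:ℝ)+1)*((k:ℝ)+2))) * (∑ j ∈ Finset.Icc 1 k, (1:ℝ)/(j:ℝ))) := by
    intro k hk
    rw [hC]
    push_cast
    ring
  rw [Finset.sum_congr rfl hstep, Finset.sum_add_distrib, ← Finset.mul_sum, ← Finset.mul_sum,
    telB m, telA m]
  have hsum1 : ∑ i ∈ Finset.Icc 1 (m+1), (1:ℝ)/(i:ℝ)
      = (∑ i ∈ Finset.Icc 1 m, (1:ℝ)/(i:ℝ)) + 1/(((m+1:ℕ)):ℝ) :=
    Finset.sum_Icc_succ_top (Nat.le_add_left 1 m) _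
  have hsum2 : ∑ i ∈ Finset.Icc 1 (m+1), (1:ℝ)/(i:ℝ)^2
      = (∑ i ∈ Finset.Icc 1 m, (1:ℝ)/(i:ℝ)^2) + 1/(((m+1:ℕ)):ℝ)^2 :=
    Finset.sum_Icc_succ_top (Nat.le_add_left 1 m) _
  rw [hH1, hH2, hsum1, hsum2, hC]
  have hm0 : ((m:ℝ)) ≠ 0 := by
    have : (1:ℝ) ≤ (m:ℝ) := by exact_mod_cast hm1
    linarith
  have hm1' : ((m:ℝ)+1) ≠ 0 := by positivity
  have hm2' : ((m:ℝ)+2) ≠ 0 := by positivity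
  push_cast
  field_simp
  ring
end
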